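/- Let (X,Y) be a conditionally dependent (CD) random vector with function s, where the marginal distribution F of X satisfies F̄(x) > 0 for all real x. Then s is bounded on D_Y: there exists a constant C > 0 such that s(y) ≤ C for all y ∈ D_Y. -/
import Mathlib


open MeasureTheory Filter Set Real ProbabilityTheory

/-- Tail function `x ↦ P(X > x)` of a random variable `X` under measure `μ`. -/
noncomputable def tailP {Ω : Type*} [MeasurableSpace Ω] (μ : Measure Ω) (X : Ω → ℝ) (x : ℝ) : ℝ :=
  (μ {ω | x < X ω}).toReal

/-- Distribution function `x ↦ P(X ≤ x)`. -/
noncomputable def cdfP {Ω : Type*} [MeasurableSpace Ω] (μ : Measure Ω) (X : Ω → ℝ) (x : ℝ) : ℝ :=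
  (μ {ω | X ω ≤ x}).toReal

/-- `D_X`: points near which `X` has positive mass. -/
def DSetX {Ω : Type*} [MeasurableSpace Ω] (μ : Measure Ω) (X : Ω → ℝ) : Set ℝ :=
  {x | ∀ δ > (0 : ℝ), 0 < μ {ω | x - δ < X ω ∧ X ω < x + δ}}

/-- `D_Y`: positive points near which `Y` has positive mass. -/
def DSetY {Ω : Type*} [MeasurableSpace Ω] (μ : Measure Ω) (Y : Ω → ℝ) : Set ℝ :=
  {y | 0 < y ∧ ∀ δ > (0 : ℝ), 0 < μ {ω | y - δ < Y ω ∧ Y ω < y + δ}}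

/-- `P(X > x | Y = y) = p`, where the conditional probability is defined as
`lim_{t↓0} P(X > x, Y ∈ [y, y+t)) / P(Y ∈ [y, y+t))`. -/
def CondTailIs {Ω : Type*} [MeasurableSpace Ω] (μ : Measure Ω) (X Y : Ω → ℝ)
    (x y p : ℝ) : Prop :=
  Tendsto (fun t : ℝ =>
      (μ {ω | x < X ω ∧ y ≤ Y ω ∧ Y ω < y + t}).toReal /
        (μ {ω | y ≤ Y ω ∧ Y ω < y + t}).toReal)
    (nhdsWithin 0 (Ioi 0)) (nhds p)

/-- `(X, Y)` is conditionally dependent (CD) with function `s`: the conditional tail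
probabilities `P(X > x | Y = y)` exist for all `y ∈ D_Y` and all large `x`, and
`lim_{x→∞} sup_{y ∈ D_Y} |P(X > x | Y = y)/(F̄(x) s(y)) - 1| = 0`. -/
def IsCDWith {Ω : Type*} [MeasurableSpace Ω] (μ : Measure Ω) (X Y : Ω → ℝ)
    (s : ℝ → ℝ) : Prop :=
  ∃ ct : ℝ → ℝ → ℝ, ∃ x₁ : ℝ,
    (∀ x ≥ x₁, ∀ y ∈ DSetY μ Y, CondTailIs μ X Y x y (ct x y)) ∧
    ∀ ε > (0 : ℝ), ∃ x₀ : ℝ, ∀ x ≥ x₀, ∀ y ∈ DSetY μ Y,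
      |ct x y / (tailP μ X x * s y) - 1| ≤ ε


/-- **Proposition 2.4.** If `(X,Y)` is CD with a positive measurable function `s` and
`F̄(x) > 0` for all `x`, then `s` is bounded on `D_Y`. -/
theorem CD_s_bounded {Ω : Type*} [MeasurableSpace Ω] (μ : Measure Ω) [IsProbabilityMeasure μ]
    (X Y : Ω → ℝ) (hX : Measurable X) (hY : Measurable Y)
    (hYpos : ∀ ω, 0 < Y ω)
    (hFpos : ∀ x : ℝ, 0 < tailP μ X x)
    (s : ℝ → ℝ) (hspos : ∀ y > (0 : ℝ), 0 < s y) (hsmeas : Measurable s)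
    (hCD : IsCDWith μ X Y s) :
    ∃ C > (0 : ℝ), ∀ y ∈ DSetY μ Y, s y ≤ C := by
  obtain ⟨ct, x₁, h1, h2⟩ := hCD
  obtain ⟨x₀, hx₀⟩ := h2 (1/2) (by norm_num)
  set x := max x₀ x₁ with hxdef
  have hT : 0 < tailP μ X x := hFpos x
  refine ⟨2 / tailP μ X x, by positivity, fun y hy => ?_⟩
  have hsy : 0 < s y := hspos y hy.1
  -- ct x y ≤ 1
  have hct1 : ct x y ≤ 1 := by
    refine le_of_tendsto (h1 x (le_max_right _ _) y hy) ?_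
    filter_upwards with t
    set a := (μ {ω | x < X ω ∧ y ≤ Y ω ∧ Y ω < y + t}).toReal
    set b := (μ {ω | y ≤ Y ω ∧ Y ω < y + t}).toReal
    rcases eq_or_lt_of_le (ENNReal.toReal_nonneg : (0:ℝ) ≤ b) with hb | hb
    · show a / b ≤ 1; rw [show b = 0 from hb.symm, div_zero]; norm_num
    · rw [div_le_one hb]
      exact ENNReal.toReal_mono (measure_ne_top μ _)
        (measure_mono (fun ω hω => hω.2))
  have habs := abs_le.mp (hx₀ x (le_max_left _ _) y hy)
  have hlow : (1:ℝ)/2 ≤ ct x y / (tailP μ X x * s y) := by linarith [habs.1]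
  have hts : 0 < tailP μ X x * s y := mul_pos hT hsy
  have : tailP μ X x * s y ≤ 2 * ct x y := by
    rw [div_le_div_iff₀ (by norm_num) hts] at hlow
    linarith
  have : tailP μ X x * s y ≤ 2 := by linarith
  rw [le_div_iff₀ hT]
  linarith [this]
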